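/- Let L(A,T) be the free Lie algebra over ℚ on A, T, with θ = [T,A], and let D^1 L(A,T) denote the kernel of the Lie algebra homomorphism L(A,T) → L(A,T)/(ideal generated by θ) ≅ the free abelianization-type quotient; equivalently D^1 is the ideal generated by θ. If δ is a derivation of L(A,T) with δ(θ) = 0 and δ(A), δ(T) ∈ D^d L(A,T) where D^d := L^d(D^1) is the d-th lower central series term of D^1, then δ maps D^1 L(A,T) into D^{d+1} L(A,T). -/
import Mathlib

open FreeLieAlgebra

namespace Stmt4

abbrev L := FreeLieAlgebra ℚ (Fin 2)

noncomputable def A : L := of ℚ 0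
noncomputable def T : L := of ℚ 1

/-- `θ = [T, A]`. -/
noncomputable def θ : L := ⁅T, A⁆

/-- `D^1 L(A,T)`: the (Lie) ideal of `L(A,T)` generated by `θ`. -/
noncomputable def D1 : LieIdeal ℚ L := LieSubmodule.lieSpan ℚ L {θ}

/-- `Dser d` is `D^(d+1) = L^(d+1)(D^1)`, the `(d+1)`-st term of the lower central
series of the ideal `D^1` (computed inside `L(A,T)`):
`Dser 0 = D^1` and `Dser (k+1) = [D^1, Dser k]`. -/
noncomputable def Dser : ℕ → LieIdeal ℚ L
  | 0 => D1
  | k + 1 => ⁅D1, Dser k⁆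

end Stmt4

open Stmt4

/-- The set of elements sent by a derivation `δ` into an ideal `I` is a Lie subalgebra. -/
noncomputable def derivPreimage (δ : LieDerivation ℚ L L) (I : LieIdeal ℚ L) :
    LieSubalgebra ℚ L where
  carrier := {x | δ x ∈ I}
  add_mem' := fun {a b} ha hb => by
    simp only [Set.mem_setOf_eq, map_add] at *
    exact I.add_mem ha hb
  zero_mem' := by simp only [Set.mem_setOf_eq, map_zero]; exact I.zero_mem
  smul_mem' := fun c x hx => by
    simp only [Set.mem_setOf_eq, map_smul] at *
    exact I.smul_mem c hx
  lie_mem' := fun {x y} hx hy => by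
    simp only [Set.mem_setOf_eq] at *
    rw [LieDerivation.apply_lie_eq_add]
    refine I.add_mem (I.lie_mem hy) ?_
    rw [← lie_skew]
    exact I.neg_mem (I.lie_mem hx)

/-- If `δ` sends both generators into an ideal `I`, then it sends everything into `I`. -/
theorem deriv_all_mem (δ : LieDerivation ℚ L L) (I : LieIdeal ℚ L)
    (h : ∀ i : Fin 2, δ (of ℚ i) ∈ I) : ∀ x : L, δ x ∈ I := by
  intro x
  set S := derivPreimage δ I
  let F : L →ₗ⁅ℚ⁆ S := lift ℚ (fun i => (⟨of ℚ i, h i⟩ : S))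
  have hcomp : S.incl.comp F = LieHom.id := by
    apply FreeLieAlgebra.hom_ext
    intro i
    simp only [LieHom.comp_apply, LieHom.id_apply, F, lift_of_apply]
    rfl
  have : S.incl (F x) = x := by
    have := congrArg (fun g : L →ₗ⁅ℚ⁆ L => g x) hcomp
    simpa using this
  have hmem : (F x : L) ∈ S := (F x).2
  rw [show ((F x : L)) = x from this] at hmem
  exact hmem

theorem derivation_raises_theta_depth (d : ℕ) (hd : 1 ≤ d)
    (δ : LieDerivation ℚ L L) (hθ : δ θ = 0)
    (hA : δ A ∈ Dser (d - 1)) (hT : δ T ∈ Dser (d - 1)) :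
    ∀ x ∈ D1, δ x ∈ Dser d := by
  have hall : ∀ x : L, δ x ∈ Dser (d - 1) := by
    refine deriv_all_mem δ _ ?_
    intro i
    fin_cases i
    · exact hA
    · exact hT
  have hdsucc : Dser d = ⁅D1, Dser (d - 1)⁆ := by
    conv_lhs => rw [← Nat.succ_pred_eq_of_pos hd]
    rfl
  -- the ideal of elements of D1 mapped into Dser d
  let N : LieIdeal ℚ L :=
    { carrier := {x | x ∈ D1 ∧ δ x ∈ Dser d}
      add_mem' := fun {a b} ha hb =>
        ⟨D1.add_mem ha.1 hb.1, by rw [map_add]; exact (Dser d).add_mem ha.2 hb.2⟩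
      zero_mem' := ⟨D1.zero_mem, by rw [map_zero]; exact (Dser d).zero_mem⟩
      smul_mem' := fun c x hx =>
        ⟨D1.smul_mem c hx.1, by rw [map_smul]; exact (Dser d).smul_mem c hx.2⟩
      lie_mem := fun {x m} hm => by
        refine ⟨D1.lie_mem hm.1, ?_⟩
        rw [LieDerivation.apply_lie_eq_add]
        refine (Dser d).add_mem ((Dser d).lie_mem hm.2) ?_
        have : ⁅δ x, m⁆ ∈ ⁅Dser (d - 1), D1⁆ :=
          LieSubmodule.lie_mem_lie (hall x) hm.1
        rw [LieSubmodule.lie_comm, ← hdsucc] at this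
        exact this }
  have hθN : θ ∈ N := ⟨LieSubmodule.subset_lieSpan rfl, by rw [hθ]; exact (Dser d).zero_mem⟩
  have hle : D1 ≤ N := by
    rw [Stmt4.D1, LieSubmodule.lieSpan_le]
    intro y hy
    rw [Set.mem_singleton_iff] at hy
    subst hy
    exact hθN
  intro x hx
  exact (hle hx).2
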